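/- Under instrument unconfoundedness, instrument overlap, monotonicity and instrumentation, the local average treatment effect is identified by outcome-regression averaging: with μ₁ = E[Z·Y | 𝓖]/π*, μ₀ = E[(1−Z)·Y | 𝓖]/(1−π*), ν₁ = E[Z·D | 𝓖]/π*, ν₀ = E[(1−Z)·D | 𝓖]/(1−π*) (the regression functions of Y and D given the instrument level and X), one has E[ν₁] − E[ν₀] = P(D(1) > D(0)) > 0 and E[Y(1) − Y(0) | D(1) > D(0)] = ( E[μ₁] − E[μ₀] ) / ( E[ν₁] − E[ν₀] ). -/

import Mathlib

open MeasureTheory ProbabilityTheory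

lemma aux_condexp_indicator_bdd {Ω : Type*} {m' : MeasurableSpace Ω}
    [mΩ : MeasurableSpace Ω] (hm' : m' ≤ mΩ)
    (P : Measure Ω) [IsProbabilityMeasure P] {A : Set Ω} (hA : MeasurableSet A) :
    ∀ᵐ ω ∂P, ‖(P[A.indicator (fun _ => (1:ℝ)) | m']) ω‖ ≤ 1 := by
  have hInd : Integrable (A.indicator (fun _ => (1:ℝ))) P :=
    (integrable_const (1:ℝ)).indicator hA
  have h0 : 0 ≤ᵐ[P] P[A.indicator (fun _ => (1:ℝ)) | m'] :=
    condExp_nonneg (Filter.Eventually.of_forall fun ω =>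
      Set.indicator_nonneg (fun _ _ => zero_le_one) ω)
  have h1 : P[A.indicator (fun _ => (1:ℝ)) | m'] ≤ᵐ[P] P[(fun _ => (1:ℝ)) | m'] :=
    condExp_mono hInd (integrable_const 1)
      (Filter.Eventually.of_forall fun ω => by
        by_cases h : ω ∈ A <;> simp [Set.indicator_apply, h])
  have hcc : P[(fun _ => (1:ℝ)) | m'] = fun _ => (1:ℝ) := condExp_const hm' (1:ℝ)
  rw [hcc] at h1
  filter_upwards [h0, h1] with ω h0 h1
  rw [Real.norm_eq_abs, abs_le]
  exact ⟨le_trans (by norm_num) h0, h1⟩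

lemma aux_continuous_setIntegral {Ω : Type*} {m : MeasurableSpace Ω}
    [mΩ : MeasurableSpace Ω] (hm : m ≤ mΩ)
    (P : Measure Ω) [IsFiniteMeasure P]
    {h' : Ω → ℝ} (hh'm : AEStronglyMeasurable h' P) (hh'b : ∀ᵐ ω ∂P, ‖h' ω‖ ≤ 1)
    (s : Set Ω) :
    Continuous fun W : Lp ℝ 1 (P.trim hm) => ∫ ω in s, h' ω * W ω ∂P := by
  refine (LipschitzWith.of_dist_le_mul (K := 1) fun U V => ?_).continuous
  have hU : Integrable (U : Ω → ℝ) P := integrable_of_integrable_trim hm (L1.integrable_coeFn U)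
  have hV : Integrable (V : Ω → ℝ) P := integrable_of_integrable_trim hm (L1.integrable_coeFn V)
  have hUV : Integrable ((U - V : Lp ℝ 1 (P.trim hm)) : Ω → ℝ) P :=
    integrable_of_integrable_trim hm (L1.integrable_coeFn _)
  have hsub : ((U - V : Lp ℝ 1 (P.trim hm)) : Ω → ℝ) =ᵐ[P] fun ω => U ω - V ω :=
    ae_eq_of_ae_eq_trim (Lp.coeFn_sub U V)
  have hint : ∀ {W : Ω → ℝ}, Integrable W P → Integrable (fun ω => h' ω * W ω) P :=
    fun hW => hW.bdd_mul hh'm hh'b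
  rw [NNReal.coe_one, one_mul, Real.dist_eq, dist_eq_norm, ← Real.norm_eq_abs]
  have e1 : (∫ ω in s, h' ω * U ω ∂P) - (∫ ω in s, h' ω * V ω ∂P)
      = ∫ ω in s, h' ω * ((U - V : Lp ℝ 1 (P.trim hm)) ω) ∂P := by
    rw [← integral_sub ((hint hU).mono_measure Measure.restrict_le_self)
      ((hint hV).mono_measure Measure.restrict_le_self)]
    refine integral_congr_ae (ae_restrict_of_ae ?_)
    filter_upwards [hsub] with ω hω
    rw [hω]; ring
  rw [e1]
  calc ‖∫ ω in s, h' ω * ((U - V : Lp ℝ 1 (P.trim hm)) ω) ∂P‖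
      ≤ ∫ ω in s, ‖h' ω * ((U - V : Lp ℝ 1 (P.trim hm)) ω)‖ ∂P :=
        norm_integral_le_integral_norm _
    _ ≤ ∫ ω in s, ‖((U - V : Lp ℝ 1 (P.trim hm)) : Ω → ℝ) ω‖ ∂P := by
        refine integral_mono_ae ((hint hUV).mono_measure Measure.restrict_le_self).norm
          (hUV.mono_measure Measure.restrict_le_self).norm ?_
        refine ae_restrict_of_ae ?_
        filter_upwards [hh'b] with ω h
        rw [norm_mul]
        exact mul_le_of_le_one_left (norm_nonneg _) h
    _ ≤ ∫ ω, ‖((U - V : Lp ℝ 1 (P.trim hm)) : Ω → ℝ) ω‖ ∂P :=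
        integral_mono_measure Measure.restrict_le_self
          (Filter.Eventually.of_forall fun _ => norm_nonneg _) hUV.norm
    _ = ∫ ω, ‖((U - V : Lp ℝ 1 (P.trim hm)) : Ω → ℝ) ω‖ ∂(P.trim hm) :=
        integral_trim_ae hm (Lp.aestronglyMeasurable _).norm
    _ = ‖U - V‖ := (L1.norm_eq_integral_norm _).symm
    _ = dist U V := (dist_eq_norm U V).symm
  exact (dist_eq_norm U V).le


lemma aux_key_setIntegral {Ω β : Type*} {m' : MeasurableSpace Ω} {mβ : MeasurableSpace β}
    [mΩ : MeasurableSpace Ω] (hm' : m' ≤ mΩ)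
    (P : Measure Ω) [IsProbabilityMeasure P]
    {f : Ω → β} (hf : Measurable f)
    {A : Set Ω} (hA : MeasurableSet A)
    (hprod : ∀ B : Set Ω, MeasurableSet[MeasurableSpace.comap f mβ] B →
      (P[(B ∩ A).indicator (fun _ => (1:ℝ)) | m'])
        =ᵐ[P] P[B.indicator (fun _ => (1:ℝ)) | m'] * P[A.indicator (fun _ => (1:ℝ)) | m'])
    {W : Ω → ℝ} (hWt : Integrable W (P.trim hf.comap_le)) :
    ∀ s : Set Ω, MeasurableSet[m'] s →
      ∫ ω in s, A.indicator (fun _ => (1:ℝ)) ω * W ω ∂P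
        = ∫ ω in s, (P[A.indicator (fun _ => (1:ℝ)) | m']) ω * W ω ∂P := by
  set p := P[A.indicator (fun _ => (1:ℝ)) | m'] with hpdef
  have hp_bdd : ∀ᵐ ω ∂P, ‖p ω‖ ≤ 1 := aux_condexp_indicator_bdd hm' P hA
  have hp_meas : AEStronglyMeasurable p P :=
    (stronglyMeasurable_condExp.mono hm').aestronglyMeasurable
  have hA_meas : AEStronglyMeasurable (A.indicator (fun _ => (1:ℝ))) P :=
    ((stronglyMeasurable_const.indicator hA)).aestronglyMeasurable
  have hA_bdd : ∀ᵐ ω ∂P, ‖A.indicator (fun _ => (1:ℝ)) ω‖ ≤ 1 :=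
    Filter.Eventually.of_forall fun ω => by
      by_cases h : ω ∈ A <;> simp [Set.indicator_apply, h]
  refine @Integrable.induction Ω ℝ (MeasurableSpace.comap f mβ) _ (P.trim hf.comap_le)
    (fun W => ∀ s : Set Ω, MeasurableSet[m'] s →
      ∫ ω in s, A.indicator (fun _ => (1:ℝ)) ω * W ω ∂P = ∫ ω in s, p ω * W ω ∂P)
    ?_ ?_ ?_ ?_ W hWt
  · -- indicators
    intro c B hB _ s hs
    have hBΩ : MeasurableSet B := hf.comap_le _ hB
    have hIndB : Integrable (B.indicator fun _ => (1:ℝ)) P := (integrable_const 1).indicator hBΩ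
    have hIndBA : Integrable ((B ∩ A).indicator fun _ => (1:ℝ)) P :=
      (integrable_const 1).indicator (hBΩ.inter hA)
    have hpB_int : Integrable (p * B.indicator fun _ => (1:ℝ)) P :=
      hIndB.bdd_mul hp_meas hp_bdd
    have hmul : P[p * B.indicator (fun _ => (1:ℝ)) | m']
        =ᵐ[P] p * P[B.indicator (fun _ => (1:ℝ)) | m'] :=
      condExp_mul_of_stronglyMeasurable_left stronglyMeasurable_condExp hpB_int hIndB
    have e1 : ∀ ω, A.indicator (fun _ => (1:ℝ)) ω * (B.indicator (fun _ => c)) ω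
        = c * (B ∩ A).indicator (fun _ => (1:ℝ)) ω := by
      intro ω
      by_cases hωA : ω ∈ A <;> by_cases hωB : ω ∈ B <;>
        simp [Set.indicator_apply, hωA, hωB, Set.mem_inter_iff, mul_comm]
    have e2 : ∀ ω, p ω * (B.indicator (fun _ => c)) ω
        = c * (p ω * B.indicator (fun _ => (1:ℝ)) ω) := by
      intro ω
      by_cases hωB : ω ∈ B <;> simp [Set.indicator_apply, hωB] <;> ring
    calc ∫ ω in s, A.indicator (fun _ => (1:ℝ)) ω * (B.indicator (fun _ => c)) ω ∂P
        = ∫ ω in s, c * (B ∩ A).indicator (fun _ => (1:ℝ)) ω ∂P := by simp_rw [e1]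
      _ = c * ∫ ω in s, (B ∩ A).indicator (fun _ => (1:ℝ)) ω ∂P := integral_const_mul c _
      _ = c * ∫ ω in s, (P[(B ∩ A).indicator (fun _ => (1:ℝ)) | m']) ω ∂P := by
          rw [setIntegral_condExp hm' hIndBA hs]
      _ = c * ∫ ω in s, (P[B.indicator (fun _ => (1:ℝ)) | m'] * p) ω ∂P := by
          rw [integral_congr_ae (ae_restrict_of_ae (hprod B hB))]
      _ = c * ∫ ω in s, (p * P[B.indicator (fun _ => (1:ℝ)) | m']) ω ∂P := by
          congr 1
          refine integral_congr_ae (ae_restrict_of_ae (Filter.Eventually.of_forall fun ω => ?_))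
          simp [mul_comm]
      _ = c * ∫ ω in s, (P[p * B.indicator (fun _ => (1:ℝ)) | m']) ω ∂P := by
          rw [integral_congr_ae (ae_restrict_of_ae hmul)]
      _ = c * ∫ ω in s, (p * B.indicator fun _ => (1:ℝ)) ω ∂P := by
          rw [setIntegral_condExp hm' hpB_int hs]
      _ = ∫ ω in s, c * (p ω * B.indicator (fun _ => (1:ℝ)) ω) ∂P := (integral_const_mul c _).symm
      _ = ∫ ω in s, p ω * (B.indicator (fun _ => c)) ω ∂P := by simp_rw [e2]
  · -- addition
    intro W1 W2 _ hW1t hW2t h1 h2 s hs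
    have hW1P : Integrable W1 P := integrable_of_integrable_trim hf.comap_le hW1t
    have hW2P : Integrable W2 P := integrable_of_integrable_trim hf.comap_le hW2t
    have i1 : Integrable (fun ω => A.indicator (fun _ => (1:ℝ)) ω * W1 ω) P :=
      hW1P.bdd_mul hA_meas hA_bdd
    have i2 : Integrable (fun ω => A.indicator (fun _ => (1:ℝ)) ω * W2 ω) P :=
      hW2P.bdd_mul hA_meas hA_bdd
    have j1 : Integrable (fun ω => p ω * W1 ω) P := hW1P.bdd_mul hp_meas hp_bdd
    have j2 : Integrable (fun ω => p ω * W2 ω) P := hW2P.bdd_mul hp_meas hp_bdd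
    calc ∫ ω in s, A.indicator (fun _ => (1:ℝ)) ω * (W1 + W2) ω ∂P
        = ∫ ω in s, (A.indicator (fun _ => (1:ℝ)) ω * W1 ω
            + A.indicator (fun _ => (1:ℝ)) ω * W2 ω) ∂P := by
          refine integral_congr_ae (ae_restrict_of_ae (Filter.Eventually.of_forall fun ω => ?_))
          simp [Pi.add_apply]; ring
      _ = (∫ ω in s, A.indicator (fun _ => (1:ℝ)) ω * W1 ω ∂P)
            + ∫ ω in s, A.indicator (fun _ => (1:ℝ)) ω * W2 ω ∂P :=
          integral_add (i1.mono_measure Measure.restrict_le_self)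
            (i2.mono_measure Measure.restrict_le_self)
      _ = (∫ ω in s, p ω * W1 ω ∂P) + ∫ ω in s, p ω * W2 ω ∂P := by
          rw [h1 s hs, h2 s hs]
      _ = ∫ ω in s, (p ω * W1 ω + p ω * W2 ω) ∂P :=
          (integral_add (j1.mono_measure Measure.restrict_le_self)
            (j2.mono_measure Measure.restrict_le_self)).symm
      _ = ∫ ω in s, p ω * (W1 + W2) ω ∂P := by
          refine integral_congr_ae (ae_restrict_of_ae (Filter.Eventually.of_forall fun ω => ?_))
          simp [Pi.add_apply]; ring
  · -- closedness
    have : {g : Lp ℝ 1 (P.trim hf.comap_le) | ∀ s : Set Ω, MeasurableSet[m'] s →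
        ∫ ω in s, A.indicator (fun _ => (1:ℝ)) ω * g ω ∂P = ∫ ω in s, p ω * g ω ∂P}
        = ⋂ (s : Set Ω), ⋂ (_ : MeasurableSet[m'] s),
            {g : Lp ℝ 1 (P.trim hf.comap_le) |
              ∫ ω in s, A.indicator (fun _ => (1:ℝ)) ω * g ω ∂P = ∫ ω in s, p ω * g ω ∂P} := by
      ext g; simp [Set.mem_iInter]
    rw [this]
    refine isClosed_iInter fun s => isClosed_iInter fun hs => isClosed_eq ?_ ?_
    · exact aux_continuous_setIntegral hf.comap_le P hA_meas hA_bdd s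
    · exact aux_continuous_setIntegral hf.comap_le P hp_meas hp_bdd s
  · -- ae congruence
    intro W1 W2 heq hW1t h1 s hs
    have heqP : W1 =ᵐ[P] W2 := ae_eq_of_ae_eq_trim heq
    calc ∫ ω in s, A.indicator (fun _ => (1:ℝ)) ω * W2 ω ∂P
        = ∫ ω in s, A.indicator (fun _ => (1:ℝ)) ω * W1 ω ∂P := by
          refine integral_congr_ae (ae_restrict_of_ae ?_)
          filter_upwards [heqP] with ω h; rw [h]
      _ = ∫ ω in s, p ω * W1 ω ∂P := h1 s hs
      _ = ∫ ω in s, p ω * W2 ω ∂P := by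
          refine integral_congr_ae (ae_restrict_of_ae ?_)
          filter_upwards [heqP] with ω h; rw [h]

lemma aux_condexp_mul {Ω β : Type*} {m' : MeasurableSpace Ω} {mβ : MeasurableSpace β}
    [mΩ : MeasurableSpace Ω] [StandardBorelSpace Ω] [Nonempty Ω] (hm' : m' ≤ mΩ)
    (P : Measure Ω) [IsProbabilityMeasure P]
    {f : Ω → β} (hf : Measurable f)
    {Z : Ω → ℝ} (hZ : Measurable Z) (hZbin : ∀ᵐ ω ∂P, Z ω = 0 ∨ Z ω = 1)
    (hind : CondIndepFun m' hm' f Z P)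
    {W : Ω → ℝ} (hWm : StronglyMeasurable[MeasurableSpace.comap f mβ] W)
    (hWint : Integrable W P) :
    P[fun ω => Z ω * W ω | m'] =ᵐ[P] fun ω => (P[Z | m']) ω * (P[W | m']) ω := by
  set A := Z ⁻¹' {1} with hAdef
  have hA : MeasurableSet A := hZ (measurableSet_singleton 1)
  have hZA : Z =ᵐ[P] A.indicator (fun _ => (1:ℝ)) := by
    filter_upwards [hZbin] with ω h
    rcases h with h | h
    · have hω : ω ∉ A := by simp [hAdef, Set.mem_preimage, h]
      simp [Set.indicator_apply, hω, h]
    · have hω : ω ∈ A := by simp [hAdef, Set.mem_preimage, h]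
      simp [Set.indicator_apply, hω, h]
  set p := P[A.indicator (fun _ => (1:ℝ)) | m'] with hpdef
  have hp_bdd : ∀ᵐ ω ∂P, ‖p ω‖ ≤ 1 := aux_condexp_indicator_bdd hm' P hA
  have hp_meas : AEStronglyMeasurable p P :=
    (stronglyMeasurable_condExp.mono hm').aestronglyMeasurable
  have hA_meas : AEStronglyMeasurable (A.indicator (fun _ => (1:ℝ))) P :=
    ((stronglyMeasurable_const.indicator hA)).aestronglyMeasurable
  have hA_bdd : ∀ᵐ ω ∂P, ‖A.indicator (fun _ => (1:ℝ)) ω‖ ≤ 1 :=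
    Filter.Eventually.of_forall fun ω => by
      by_cases h : ω ∈ A <;> simp [Set.indicator_apply, h]
  have hprod : ∀ B : Set Ω, MeasurableSet[MeasurableSpace.comap f mβ] B →
      (P[(B ∩ A).indicator (fun _ => (1:ℝ)) | m'])
        =ᵐ[P] P[B.indicator (fun _ => (1:ℝ)) | m'] * P[A.indicator (fun _ => (1:ℝ)) | m'] := by
    intro B hB
    exact (condIndepFun_iff m' hm' f Z hf hZ P).mp hind B A hB
      ⟨{1}, measurableSet_singleton 1, rfl⟩
  have hWt : Integrable W (P.trim hf.comap_le) := hWint.trim hf.comap_le hWm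
  have key := aux_key_setIntegral hm' P hf hA hprod hWt
  have hAW_int : Integrable (fun ω => A.indicator (fun _ => (1:ℝ)) ω * W ω) P :=
    hWint.bdd_mul hA_meas hA_bdd
  have hpW_int : Integrable (p * W) P := hWint.bdd_mul hp_meas hp_bdd
  have hmul : P[p * W | m'] =ᵐ[P] p * P[W | m'] :=
    condExp_mul_of_stronglyMeasurable_left stronglyMeasurable_condExp hpW_int hWint
  have hmain : (fun ω => p ω * (P[W | m']) ω)
      =ᵐ[P] P[fun ω => A.indicator (fun _ => (1:ℝ)) ω * W ω | m'] := by
    refine ae_eq_condExp_of_forall_setIntegral_eq hm' hAW_int ?_ ?_ ?_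
    · intro s _ _
      exact (integrable_condExp.bdd_mul hp_meas hp_bdd).mono_measure Measure.restrict_le_self
    · intro s hs _
      calc ∫ ω in s, p ω * (P[W | m']) ω ∂P
          = ∫ ω in s, (P[p * W | m']) ω ∂P := by
            refine integral_congr_ae (ae_restrict_of_ae ?_)
            filter_upwards [hmul] with ω h
            rw [h]; rfl
        _ = ∫ ω in s, (p * W) ω ∂P := setIntegral_condExp hm' hpW_int hs
        _ = ∫ ω in s, p ω * W ω ∂P := rfl
        _ = ∫ ω in s, A.indicator (fun _ => (1:ℝ)) ω * W ω ∂P := (key s hs).symm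
    · exact (stronglyMeasurable_condExp.mul stronglyMeasurable_condExp).aestronglyMeasurable
  have step1 : P[fun ω => Z ω * W ω | m']
      =ᵐ[P] P[fun ω => A.indicator (fun _ => (1:ℝ)) ω * W ω | m'] := by
    refine condExp_congr_ae ?_
    filter_upwards [hZA] with ω h
    rw [h]
  have step3 : P[Z | m'] =ᵐ[P] p := condExp_congr_ae hZA
  refine step1.trans (hmain.symm.trans ?_)
  filter_upwards [step3] with ω h
  rw [h]

theorem aux_main
    {Ω : Type*} (𝓖 : MeasurableSpace Ω) [mΩ : MeasurableSpace Ω] [StandardBorelSpace Ω]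
    [Nonempty Ω]
    (P : Measure Ω) [IsProbabilityMeasure P]
    (Z D1 D0 Y1 Y0 : Ω → ℝ)
    (hZmeas : Measurable Z) (hD1meas : Measurable D1) (hD0meas : Measurable D0)
    (hY1meas : Measurable Y1) (hY0meas : Measurable Y0)
    (hZbin : ∀ᵐ ω ∂P, Z ω = 0 ∨ Z ω = 1)
    (hD1bin : ∀ᵐ ω ∂P, D1 ω = 0 ∨ D1 ω = 1)
    (hD0bin : ∀ᵐ ω ∂P, D0 ω = 0 ∨ D0 ω = 1)
    (h𝓖le : 𝓖 ≤ mΩ)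
    (πs : Ω → ℝ) (hπs : πs = P[Z | 𝓖])
    (hunconf : CondIndepFun 𝓖 h𝓖le (fun ω => (Y1 ω, Y0 ω, D1 ω, D0 ω)) Z P)
    (hoverlap : ∀ᵐ ω ∂P, 0 < πs ω ∧ πs ω < 1)
    (hmono : ∀ᵐ ω ∂P, D0 ω ≤ D1 ω)
    (hinstr : P {ω | D1 ω = 1} ≠ P {ω | D0 ω = 1})
    (D Y : Ω → ℝ)
    (hD : D = fun ω => Z ω * D1 ω + (1 - Z ω) * D0 ω)
    (hY : Y = fun ω => D ω * Y1 ω + (1 - D ω) * Y0 ω)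
    (μ1 μ0 ν1 ν0 : Ω → ℝ)
    (hμ1 : μ1 = fun ω => (P[fun ω' => Z ω' * Y ω' | 𝓖]) ω / πs ω)
    (hμ0 : μ0 = fun ω => (P[fun ω' => (1 - Z ω') * Y ω' | 𝓖]) ω / (1 - πs ω))
    (hν1 : ν1 = fun ω => (P[fun ω' => Z ω' * D ω' | 𝓖]) ω / πs ω)
    (hν0 : ν0 = fun ω => (P[fun ω' => (1 - Z ω') * D ω' | 𝓖]) ω / (1 - πs ω))
    (hZYint : Integrable (fun ω => Z ω * Y ω) P)
    (hZYint' : Integrable (fun ω => (1 - Z ω) * Y ω) P)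
    (hZDint : Integrable (fun ω => Z ω * D ω) P)
    (hZDint' : Integrable (fun ω => (1 - Z ω) * D ω) P)
    (hY1int : Integrable Y1 P) (hY0int : Integrable Y0 P) :
    ((∫ ω, ν1 ω ∂P) - (∫ ω, ν0 ω ∂P) = (P {ω | D0 ω < D1 ω}).toReal) ∧
    0 < (P {ω | D0 ω < D1 ω}).toReal ∧
    (∫ ω in {ω | D0 ω < D1 ω}, (Y1 ω - Y0 ω) ∂P) / (P {ω | D0 ω < D1 ω}).toReal =
      ((∫ ω, μ1 ω ∂P) - (∫ ω, μ0 ω ∂P)) / ((∫ ω, ν1 ω ∂P) - (∫ ω, ν0 ω ∂P)) := by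
  -- the joint potential-outcome map
  set f : Ω → ℝ × ℝ × ℝ × ℝ := fun ω => (Y1 ω, Y0 ω, D1 ω, D0 ω) with hfdef
  have hfmeas : Measurable f :=
    (hY1meas.prodMk (hY0meas.prodMk (hD1meas.prodMk hD0meas)))
  have hcm : Measurable[MeasurableSpace.comap f inferInstance] f :=
    measurable_iff_comap_le.mpr le_rfl
  have hY1c : Measurable[MeasurableSpace.comap f inferInstance] Y1 := by
    exact measurable_fst.comp hcm
  have hY0c : Measurable[MeasurableSpace.comap f inferInstance] Y0 := by
    exact (measurable_fst.comp measurable_snd).comp hcm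
  have hD1c : Measurable[MeasurableSpace.comap f inferInstance] D1 := by
    exact (measurable_fst.comp (measurable_snd.comp measurable_snd)).comp hcm
  have hD0c : Measurable[MeasurableSpace.comap f inferInstance] D0 := by
    exact (measurable_snd.comp (measurable_snd.comp measurable_snd)).comp hcm
  -- the two "observed regression" functions
  set W1 : Ω → ℝ := fun ω => D1 ω * Y1 ω + (1 - D1 ω) * Y0 ω with hW1def
  set W0 : Ω → ℝ := fun ω => D0 ω * Y1 ω + (1 - D0 ω) * Y0 ω with hW0def
  have hW1c : StronglyMeasurable[MeasurableSpace.comap f inferInstance] W1 :=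
    ((hD1c.mul hY1c).add ((measurable_const.sub hD1c).mul hY0c)).stronglyMeasurable
  have hW0c : StronglyMeasurable[MeasurableSpace.comap f inferInstance] W0 :=
    ((hD0c.mul hY1c).add ((measurable_const.sub hD0c).mul hY0c)).stronglyMeasurable
  have hW1meas : Measurable W1 := (hD1meas.mul hY1meas).add ((measurable_const.sub hD1meas).mul hY0meas)
  have hW0meas : Measurable W0 := (hD0meas.mul hY1meas).add ((measurable_const.sub hD0meas).mul hY0meas)
  -- integrability
  have hg_int : Integrable (fun ω => ‖Y1 ω‖ + ‖Y0 ω‖) P := hY1int.norm.add hY0int.norm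
  have hboundW : ∀ (Dx : Ω → ℝ), (∀ᵐ ω ∂P, Dx ω = 0 ∨ Dx ω = 1) →
      ∀ᵐ ω ∂P, ‖Dx ω * Y1 ω + (1 - Dx ω) * Y0 ω‖ ≤ ‖Y1 ω‖ + ‖Y0 ω‖ := by
    intro Dx hbin
    filter_upwards [hbin] with ω h
    rcases h with h | h <;> rw [h]
    · simp only [zero_mul, sub_zero, one_mul, zero_add]
      exact le_add_of_nonneg_left (norm_nonneg _)
    · simp only [one_mul, sub_self, zero_mul, add_zero]
      exact le_add_of_nonneg_right (norm_nonneg _)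
  have hW1int : Integrable W1 P :=
    Integrable.mono' hg_int hW1meas.aestronglyMeasurable (hboundW D1 hD1bin)
  have hW0int : Integrable W0 P :=
    Integrable.mono' hg_int hW0meas.aestronglyMeasurable (hboundW D0 hD0bin)
  have hone : Integrable (fun _ : Ω => (1:ℝ)) P := integrable_const 1
  have hD1int : Integrable D1 P := by
    refine Integrable.mono' hone hD1meas.aestronglyMeasurable ?_
    filter_upwards [hD1bin] with ω h
    rcases h with h | h <;> rw [h] <;> norm_num
  have hD0int : Integrable D0 P := by
    refine Integrable.mono' hone hD0meas.aestronglyMeasurable ?_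
    filter_upwards [hD0bin] with ω h
    rcases h with h | h <;> rw [h] <;> norm_num
  have hZD1int : Integrable (fun ω => Z ω * D1 ω) P := by
    refine Integrable.mono' hone (hZmeas.mul hD1meas).aestronglyMeasurable ?_
    filter_upwards [hZbin, hD1bin] with ω hz h
    rcases hz with hz | hz <;> rcases h with h | h <;> rw [hz, h] <;> norm_num
  have hZD0int : Integrable (fun ω => Z ω * D0 ω) P := by
    refine Integrable.mono' hone (hZmeas.mul hD0meas).aestronglyMeasurable ?_
    filter_upwards [hZbin, hD0bin] with ω hz h
    rcases hz with hz | hz <;> rcases h with h | h <;> rw [hz, h] <;> norm_num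
  have hZW1int : Integrable (fun ω => Z ω * W1 ω) P := by
    refine Integrable.mono' hg_int (hZmeas.mul hW1meas).aestronglyMeasurable ?_
    filter_upwards [hZbin, hboundW D1 hD1bin] with ω hz h
    rcases hz with hz | hz <;> rw [hz]
    · simpa using add_nonneg (norm_nonneg (Y1 ω)) (norm_nonneg (Y0 ω))
    · simpa using h
  have hZW0int : Integrable (fun ω => Z ω * W0 ω) P := by
    refine Integrable.mono' hg_int (hZmeas.mul hW0meas).aestronglyMeasurable ?_
    filter_upwards [hZbin, hboundW D0 hD0bin] with ω hz h
    rcases hz with hz | hz <;> rw [hz]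
    · simpa using add_nonneg (norm_nonneg (Y1 ω)) (norm_nonneg (Y0 ω))
    · simpa using h
  -- the key conditional independence results
  have kW1 := aux_condexp_mul h𝓖le P hfmeas hZmeas hZbin hunconf hW1c hW1int
  have kW0 := aux_condexp_mul h𝓖le P hfmeas hZmeas hZbin hunconf hW0c hW0int
  have kD1 := aux_condexp_mul h𝓖le P hfmeas hZmeas hZbin hunconf hD1c.stronglyMeasurable hD1int
  have kD0 := aux_condexp_mul h𝓖le P hfmeas hZmeas hZbin hunconf hD0c.stronglyMeasurable hD0int
  -- ν1 : E[ZD|G]/π = E[D1|G]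
  have eZD : (fun ω => Z ω * D ω) =ᵐ[P] fun ω => Z ω * D1 ω := by
    filter_upwards [hZbin] with ω h
    rw [hD]; try dsimp only
    rcases h with h | h <;> rw [h] <;> ring
  have hν1ae : (fun ω => (P[fun ω' => Z ω' * D ω' | 𝓖]) ω / πs ω) =ᵐ[P] P[D1 | 𝓖] := by
    filter_upwards [(condExp_congr_ae eZD).trans kD1, hoverlap] with ω h hov
    try dsimp only
    rw [hπs, h]; try dsimp only
    exact mul_div_cancel_left₀ _ (ne_of_gt (by rw [hπs] at hov; exact hov.1))
  have hIν1 : ∫ ω, ν1 ω ∂P = ∫ ω, D1 ω ∂P := by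
    rw [hν1]
    exact (integral_congr_ae hν1ae).trans (integral_condExp (f := D1) h𝓖le)
  -- ν0 : E[(1-Z)D|G]/(1-π) = E[D0|G]
  have eZD0 : (fun ω => (1 - Z ω) * D ω) =ᵐ[P] fun ω => D0 ω - Z ω * D0 ω := by
    filter_upwards [hZbin] with ω h
    rw [hD]; try dsimp only
    rcases h with h | h <;> rw [h] <;> ring
  have hcν0 : P[fun ω => (1 - Z ω) * D ω | 𝓖]
      =ᵐ[P] fun ω => (1 - (P[Z | 𝓖]) ω) * (P[D0 | 𝓖]) ω := by
    refine ((condExp_congr_ae eZD0).trans (condExp_sub hD0int hZD0int 𝓖)).trans ?_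
    filter_upwards [kD0] with ω h
    simp only [Pi.sub_apply]
    rw [h]
    try dsimp only
    ring
  have hν0ae : (fun ω => (P[fun ω' => (1 - Z ω') * D ω' | 𝓖]) ω / (1 - πs ω))
      =ᵐ[P] P[D0 | 𝓖] := by
    filter_upwards [hcν0, hoverlap] with ω h hov
    try dsimp only
    rw [hπs, h]; try dsimp only
    rw [hπs] at hov
    exact mul_div_cancel_left₀ _ (ne_of_gt (by linarith [hov.2]))
  have hIν0 : ∫ ω, ν0 ω ∂P = ∫ ω, D0 ω ∂P := by
    rw [hν0]
    exact (integral_congr_ae hν0ae).trans (integral_condExp (f := D0) h𝓖le)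
  -- μ1 : E[ZY|G]/π = E[W1|G]
  have eZY : (fun ω => Z ω * Y ω) =ᵐ[P] fun ω => Z ω * W1 ω := by
    filter_upwards [hZbin] with ω h
    rw [hY, hD, hW1def]; try dsimp only
    rcases h with h | h <;> rw [h] <;> ring
  have hμ1ae : (fun ω => (P[fun ω' => Z ω' * Y ω' | 𝓖]) ω / πs ω) =ᵐ[P] P[W1 | 𝓖] := by
    filter_upwards [(condExp_congr_ae eZY).trans kW1, hoverlap] with ω h hov
    try dsimp only
    rw [hπs, h]; try dsimp only
    exact mul_div_cancel_left₀ _ (ne_of_gt (by rw [hπs] at hov; exact hov.1))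
  have hIμ1 : ∫ ω, μ1 ω ∂P = ∫ ω, W1 ω ∂P := by
    rw [hμ1]
    exact (integral_congr_ae hμ1ae).trans (integral_condExp (f := W1) h𝓖le)
  -- μ0 : E[(1-Z)Y|G]/(1-π) = E[W0|G]
  have eZY0 : (fun ω => (1 - Z ω) * Y ω) =ᵐ[P] fun ω => W0 ω - Z ω * W0 ω := by
    filter_upwards [hZbin] with ω h
    rw [hY, hD, hW0def]; try dsimp only
    rcases h with h | h <;> rw [h] <;> ring
  have hcμ0 : P[fun ω => (1 - Z ω) * Y ω | 𝓖]
      =ᵐ[P] fun ω => (1 - (P[Z | 𝓖]) ω) * (P[W0 | 𝓖]) ω := by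
    refine ((condExp_congr_ae eZY0).trans (condExp_sub hW0int hZW0int 𝓖)).trans ?_
    filter_upwards [kW0] with ω h
    simp only [Pi.sub_apply]
    rw [h]
    try dsimp only
    ring
  have hμ0ae : (fun ω => (P[fun ω' => (1 - Z ω') * Y ω' | 𝓖]) ω / (1 - πs ω))
      =ᵐ[P] P[W0 | 𝓖] := by
    filter_upwards [hcμ0, hoverlap] with ω h hov
    try dsimp only
    rw [hπs, h]; try dsimp only
    rw [hπs] at hov
    exact mul_div_cancel_left₀ _ (ne_of_gt (by linarith [hov.2]))
  have hIμ0 : ∫ ω, μ0 ω ∂P = ∫ ω, W0 ω ∂P := by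
    rw [hμ0]
    exact (integral_congr_ae hμ0ae).trans (integral_condExp (f := W0) h𝓖le)
  -- the complier set
  have hS : MeasurableSet {ω | D0 ω < D1 ω} := measurableSet_lt hD0meas hD1meas
  have hIndS : (fun ω => D1 ω - D0 ω)
      =ᵐ[P] ({ω | D0 ω < D1 ω}).indicator (fun _ => (1:ℝ)) := by
    filter_upwards [hD1bin, hD0bin, hmono] with ω h1 h0 hm
    rcases h1 with h1 | h1 <;> rcases h0 with h0 | h0
    · rw [Set.indicator_apply]; norm_num [Set.mem_setOf_eq, h1, h0]
    · exfalso; rw [h0, h1] at hm; linarith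
    · rw [Set.indicator_apply]; norm_num [Set.mem_setOf_eq, h1, h0]
    · rw [Set.indicator_apply]; norm_num [Set.mem_setOf_eq, h1, h0]
  have hT : (∫ ω, D1 ω ∂P) - ∫ ω, D0 ω ∂P = (P {ω | D0 ω < D1 ω}).toReal := by
    rw [← integral_sub hD1int hD0int, integral_congr_ae hIndS,
      integral_indicator_const (1:ℝ) hS, smul_eq_mul, mul_one, measureReal_def]
  -- positivity
  have hD1eqP : ∫ ω, D1 ω ∂P = (P {ω | D1 ω = 1}).toReal := by
    have hms : MeasurableSet {ω | D1 ω = 1} := hD1meas (measurableSet_singleton 1)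
    have he : D1 =ᵐ[P] ({ω | D1 ω = 1}).indicator (fun _ => (1:ℝ)) := by
      filter_upwards [hD1bin] with ω h
      rcases h with h | h <;> rw [Set.indicator_apply] <;> norm_num [Set.mem_setOf_eq, h]
    rw [integral_congr_ae he, integral_indicator_const (1:ℝ) hms, smul_eq_mul, mul_one, measureReal_def]
  have hD0eqP : ∫ ω, D0 ω ∂P = (P {ω | D0 ω = 1}).toReal := by
    have hms : MeasurableSet {ω | D0 ω = 1} := hD0meas (measurableSet_singleton 1)
    have he : D0 =ᵐ[P] ({ω | D0 ω = 1}).indicator (fun _ => (1:ℝ)) := by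
      filter_upwards [hD0bin] with ω h
      rcases h with h | h <;> rw [Set.indicator_apply] <;> norm_num [Set.mem_setOf_eq, h]
    rw [integral_congr_ae he, integral_indicator_const (1:ℝ) hms, smul_eq_mul, mul_one, measureReal_def]
  have hpos : 0 < (P {ω | D0 ω < D1 ω}).toReal := by
    refine lt_of_le_of_ne ENNReal.toReal_nonneg (fun h0 => ?_)
    apply hinstr
    have h1 : (P {ω | D1 ω = 1}).toReal = (P {ω | D0 ω = 1}).toReal := by
      rw [← hD1eqP, ← hD0eqP]; linarith [hT]
    exact (ENNReal.toReal_eq_toReal_iff' (measure_ne_top P _) (measure_ne_top P _)).mp h1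
  -- the numerator
  have hNum : (∫ ω, W1 ω ∂P) - ∫ ω, W0 ω ∂P
      = ∫ ω in {ω | D0 ω < D1 ω}, (Y1 ω - Y0 ω) ∂P := by
    rw [← integral_sub hW1int hW0int, ← integral_indicator hS]
    refine integral_congr_ae ?_
    filter_upwards [hIndS] with ω h
    rw [hW1def, hW0def]; try dsimp only
    have hr : D1 ω * Y1 ω + (1 - D1 ω) * Y0 ω - (D0 ω * Y1 ω + (1 - D0 ω) * Y0 ω)
        = (D1 ω - D0 ω) * (Y1 ω - Y0 ω) := by ring
    rw [hr, h]
    by_cases hω : ω ∈ {ω | D0 ω < D1 ω} <;>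
      simp [Set.indicator_apply, hω]
  refine ⟨by rw [hIν1, hIν0]; exact hT, hpos, ?_⟩
  rw [hIν1, hIν0, hIμ1, hIμ0, hNum, hT]


/-- Under instrument unconfoundedness, overlap, monotonicity and instrumentation,
the LATE is identified by outcome-regression averaging. -/
theorem stmt_4
    {Ω : Type*} [mΩ : MeasurableSpace Ω] [StandardBorelSpace Ω] [Nonempty Ω]
    {𝒳 : Type*} [MeasurableSpace 𝒳] [StandardBorelSpace 𝒳]
    (P : Measure Ω) [IsProbabilityMeasure P]
    (Z D1 D0 Y1 Y0 : Ω → ℝ) (X : Ω → 𝒳)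
    (hZmeas : Measurable Z) (hD1meas : Measurable D1) (hD0meas : Measurable D0)
    (hY1meas : Measurable Y1) (hY0meas : Measurable Y0) (hXmeas : Measurable X)
    (hZbin : ∀ᵐ ω ∂P, Z ω = 0 ∨ Z ω = 1)
    (hD1bin : ∀ᵐ ω ∂P, D1 ω = 0 ∨ D1 ω = 1)
    (hD0bin : ∀ᵐ ω ∂P, D0 ω = 0 ∨ D0 ω = 1)
    (𝓖 : MeasurableSpace Ω) (h𝓖 : 𝓖 = MeasurableSpace.comap X inferInstance)
    (h𝓖le : 𝓖 ≤ mΩ)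
    (πs : Ω → ℝ) (hπs : πs = P[Z | 𝓖])
    (hunconf : CondIndepFun 𝓖 h𝓖le (fun ω => (Y1 ω, Y0 ω, D1 ω, D0 ω)) Z P)
    (hoverlap : ∀ᵐ ω ∂P, 0 < πs ω ∧ πs ω < 1)
    (hmono : ∀ᵐ ω ∂P, D0 ω ≤ D1 ω)
    (hinstr : P {ω | D1 ω = 1} ≠ P {ω | D0 ω = 1})
    (D Y : Ω → ℝ)
    (hD : D = fun ω => Z ω * D1 ω + (1 - Z ω) * D0 ω)
    (hY : Y = fun ω => D ω * Y1 ω + (1 - D ω) * Y0 ω)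
    (μ1 μ0 ν1 ν0 : Ω → ℝ)
    (hμ1 : μ1 = fun ω => (P[fun ω' => Z ω' * Y ω' | 𝓖]) ω / πs ω)
    (hμ0 : μ0 = fun ω => (P[fun ω' => (1 - Z ω') * Y ω' | 𝓖]) ω / (1 - πs ω))
    (hν1 : ν1 = fun ω => (P[fun ω' => Z ω' * D ω' | 𝓖]) ω / πs ω)
    (hν0 : ν0 = fun ω => (P[fun ω' => (1 - Z ω') * D ω' | 𝓖]) ω / (1 - πs ω))
    (hμ1int : Integrable μ1 P) (hμ0int : Integrable μ0 P)
    (hν1int : Integrable ν1 P) (hν0int : Integrable ν0 P)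
    (hZYint : Integrable (fun ω => Z ω * Y ω) P)
    (hZYint' : Integrable (fun ω => (1 - Z ω) * Y ω) P)
    (hZDint : Integrable (fun ω => Z ω * D ω) P)
    (hZDint' : Integrable (fun ω => (1 - Z ω) * D ω) P)
    (hY1int : Integrable Y1 P) (hY0int : Integrable Y0 P) :
    ((∫ ω, ν1 ω ∂P) - (∫ ω, ν0 ω ∂P) = (P {ω | D0 ω < D1 ω}).toReal) ∧
    0 < (P {ω | D0 ω < D1 ω}).toReal ∧
    (∫ ω in {ω | D0 ω < D1 ω}, (Y1 ω - Y0 ω) ∂P) / (P {ω | D0 ω < D1 ω}).toReal =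
      ((∫ ω, μ1 ω ∂P) - (∫ ω, μ0 ω ∂P)) / ((∫ ω, ν1 ω ∂P) - (∫ ω, ν0 ω ∂P)) := by
  exact aux_main (mΩ := mΩ) 𝓖 P Z D1 D0 Y1 Y0 hZmeas hD1meas hD0meas hY1meas hY0meas
    hZbin hD1bin hD0bin h𝓖le πs hπs hunconf hoverlap hmono hinstr D Y hD hY
    μ1 μ0 ν1 ν0 hμ1 hμ0 hν1 hν0 hZYint hZYint' hZDint hZDint' hY1int hY0int
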